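/- For an odd prime p, natural numbers M ≥ 1 and 1 ≤ N ≤ p-1: the sum Σ_{k=0}^{MN} p(Mp, N, kp) equals (1/p)·[C(Mp+N, N) − 1] + 1. -/

import Mathlib

/-- The number of partitions of n into at most N parts, each of size at most M. -/
def restrictedPartitions (M N n : ℕ) : ℕ :=
  ((Finset.univ : Finset (Fin N → Fin (M + 1))).filter
    (fun f => (∀ i j : Fin N, i ≤ j → (f j : ℕ) ≤ (f i : ℕ)) ∧
      ∑ i, (f i : ℕ) = n)).card

namespace RP
abbrev P := restrictedPartitions

def pfin (M N n : ℕ) : Finset (Fin N → Fin (M + 1)) :=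
  (Finset.univ : Finset (Fin N → Fin (M + 1))).filter
    (fun f => (∀ i j : Fin N, i ≤ j → (f j : ℕ) ≤ (f i : ℕ)) ∧
      ∑ i, (f i : ℕ) = n)

lemma P_def (M N n : ℕ) : P M N n = (pfin M N n).card := rfl

lemma mem_pfin {M N n : ℕ} {f : Fin N → Fin (M+1)} :
    f ∈ pfin M N n ↔ (∀ i j : Fin N, i ≤ j → (f j : ℕ) ≤ (f i : ℕ)) ∧
      ∑ i, (f i : ℕ) = n := by
  simp [pfin]

lemma cardA (M N n : ℕ) :
    ((pfin (M+1) (N+1) n).filter (fun f => ¬ (f 0 : ℕ) = M + 1)).card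
      = P M (N+1) n := by
  rw [P_def]
  refine Finset.card_bij'
    (fun f _ => fun k => (⟨min (f k : ℕ) M, by omega⟩ : Fin (M+1)))
    (fun g _ => fun k => (g k).castSucc) ?_ ?_ ?_ ?_
  · intro f hf
    rw [Finset.mem_filter] at hf
    obtain ⟨hf, h0⟩ := hf
    rw [mem_pfin] at hf
    obtain ⟨hmono, hsum⟩ := hf
    rw [mem_pfin]
    have hle : ∀ k, (f k : ℕ) ≤ M := by
      intro k
      have h1 : (f k : ℕ) ≤ (f 0 : ℕ) := hmono 0 k (Fin.zero_le k)
      have h2 : (f 0 : ℕ) < M + 1 + 1 := (f 0).isLt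
      omega
    constructor
    · intro i j hij
      have h1 := hmono i j hij
      have h2 := hle i
      have h3 := hle j
      simp only [Fin.val_mk]
      omega
    · refine (Finset.sum_congr rfl fun k _ => ?_).trans hsum
      have := hle k
      simp only [Fin.val_mk]
      omega
  · intro g hg
    rw [mem_pfin] at hg
    obtain ⟨hmono, hsum⟩ := hg
    rw [Finset.mem_filter, mem_pfin]
    refine ⟨⟨fun i j hij => by simpa using hmono i j hij, ?_⟩, ?_⟩
    · exact (Finset.sum_congr rfl fun k _ => by simp).trans hsum
    · have := (g 0).isLt
      simp only [Fin.coe_castSucc]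
      omega
  · intro f hf
    rw [Finset.mem_filter, mem_pfin] at hf
    obtain ⟨⟨hmono, hsum⟩, h0⟩ := hf
    funext k
    apply Fin.ext
    simp only [Fin.coe_castSucc]
    have h1 : (f k : ℕ) ≤ (f 0 : ℕ) := hmono 0 k (Fin.zero_le k)
    have h2 : (f 0 : ℕ) < M + 1 + 1 := (f 0).isLt
    omega
  · intro g hg
    funext k
    apply Fin.ext
    have := (g k).isLt
    simp only [Fin.coe_castSucc, Fin.val_mk]
    omega

lemma cardB_pos (M N n : ℕ) (hn : M + 1 ≤ n) :
    ((pfin (M+1) (N+1) n).filter (fun f => (f 0 : ℕ) = M + 1)).card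
      = P (M+1) N (n-(M+1)) := by
  rw [P_def]
  refine Finset.card_bij'
    (fun f _ => fun k => f k.succ)
    (fun g _ => (Fin.cons (⟨M+1, Nat.lt_succ_self (M+1)⟩ : Fin (M+1+1)) g :
      Fin (N+1) → Fin (M+1+1))) ?_ ?_ ?_ ?_
  · intro f hf
    rw [Finset.mem_filter, mem_pfin] at hf
    obtain ⟨⟨hmono, hsum⟩, h0⟩ := hf
    rw [mem_pfin]
    refine ⟨fun i j hij => hmono i.succ j.succ (by
      simpa only [Fin.succ_le_succ_iff] using hij), ?_⟩
    rw [Fin.sum_univ_succ] at hsum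
    show ∑ i : Fin N, (f i.succ : ℕ) = n - (M+1)
    omega
  · intro g hg
    rw [mem_pfin] at hg
    obtain ⟨hmono, hsum⟩ := hg
    rw [Finset.mem_filter, mem_pfin]
    refine ⟨⟨?_, ?_⟩, by simp⟩
    · intro i j hij
      rcases Fin.eq_zero_or_eq_succ i with rfl | ⟨i', rfl⟩
      · simp only [Fin.cons_zero]
        have := ((Fin.cons (⟨M+1, Nat.lt_succ_self (M+1)⟩ : Fin (M+1+1)) g :
          Fin (N+1) → Fin (M+1+1)) j).isLt
        omega
      · rcases Fin.eq_zero_or_eq_succ j with rfl | ⟨j', rfl⟩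
        · exact absurd hij (by simp [Fin.le_def])
        · simp only [Fin.cons_succ]
          exact hmono i' j' (by rwa [Fin.succ_le_succ_iff] at hij)
    · rw [Fin.sum_univ_succ]
      simp only [Fin.cons_zero, Fin.cons_succ]
      omega
  · intro f hf
    rw [Finset.mem_filter, mem_pfin] at hf
    obtain ⟨-, h0⟩ := hf
    funext k
    rcases Fin.eq_zero_or_eq_succ k with rfl | ⟨k', rfl⟩
    · simp only [Fin.cons_zero]
      exact Fin.ext h0.symm
    · simp only [Fin.cons_succ]
  · intro g hg
    funext k
    simp only [Fin.cons_succ]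

lemma cardB_neg (M N n : ℕ) (hn : ¬ M + 1 ≤ n) :
    ((pfin (M+1) (N+1) n).filter (fun f => (f 0 : ℕ) = M + 1)).card = 0 := by
  rw [Finset.card_eq_zero, Finset.filter_eq_empty_iff]
  intro f hf
  rw [mem_pfin] at hf
  obtain ⟨hmono, hsum⟩ := hf
  intro h0
  have : (f 0 : ℕ) ≤ ∑ i, (f i : ℕ) :=
    Finset.single_le_sum (f := fun i => (f i : ℕ)) (fun i _ => Nat.zero_le _)
      (Finset.mem_univ 0)
  omega

/-- split on whether the largest part equals M+1 -/
lemma R2 (M N n : ℕ) :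
    P (M+1) (N+1) n = P M (N+1) n + (if M+1 ≤ n then P (M+1) N (n-(M+1)) else 0) := by
  classical
  have hsplit := Finset.card_filter_add_card_filter_not
    (s := pfin (M+1) (N+1) n) (p := fun f => (f 0 : ℕ) = M + 1)
  rw [P_def]
  rw [← hsplit, cardA]
  by_cases hn : M + 1 ≤ n
  · rw [if_pos hn, cardB_pos M N n hn]
    exact Nat.add_comm _ _
  · rw [if_neg hn, cardB_neg M N n hn]
    simp

end RP

namespace RP

lemma cardA1 (M N n : ℕ) :
    ((pfin (M+1) (N+1) n).filter (fun f => (f (Fin.last N) : ℕ) = 0)).card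
      = P (M+1) N n := by
  rw [P_def]
  refine Finset.card_bij'
    (fun f _ => fun k => f k.castSucc)
    (fun g _ => (Fin.snoc g (0 : Fin (M+1+1)) : Fin (N+1) → Fin (M+1+1))) ?_ ?_ ?_ ?_
  · intro f hf
    rw [Finset.mem_filter, mem_pfin] at hf
    obtain ⟨⟨hmono, hsum⟩, h0⟩ := hf
    rw [mem_pfin]
    refine ⟨fun i j hij => hmono i.castSucc j.castSucc
      (Fin.castSucc_le_castSucc_iff.mpr hij), ?_⟩
    rw [Fin.sum_univ_castSucc] at hsum
    show ∑ i : Fin N, (f i.castSucc : ℕ) = n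
    omega
  · intro g hg
    rw [mem_pfin] at hg
    obtain ⟨hmono, hsum⟩ := hg
    rw [Finset.mem_filter, mem_pfin]
    refine ⟨⟨?_, ?_⟩, by simp⟩
    · intro i j hij
      rcases Fin.eq_castSucc_or_eq_last j with ⟨j', rfl⟩ | rfl
      · rcases Fin.eq_castSucc_or_eq_last i with ⟨i', rfl⟩ | rfl
        · simp only [Fin.snoc_castSucc]
          exact hmono i' j' (Fin.castSucc_le_castSucc_iff.mp hij)
        · exact absurd hij (by
            simp only [Fin.le_def, Fin.val_last, Fin.coe_castSucc]
            exact Nat.not_le.mpr j'.isLt)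
      · simp only [Fin.snoc_last, Fin.val_zero]
        exact Nat.zero_le _
    · rw [Fin.sum_univ_castSucc]
      simp only [Fin.snoc_castSucc, Fin.snoc_last, Fin.val_zero]
      omega
  · intro f hf
    rw [Finset.mem_filter, mem_pfin] at hf
    obtain ⟨-, h0⟩ := hf
    funext k
    rcases Fin.eq_castSucc_or_eq_last k with ⟨k', rfl⟩ | rfl
    · simp only [Fin.snoc_castSucc]
    · simp only [Fin.snoc_last]
      exact (Fin.ext h0).symm
  · intro g hg
    funext k
    simp only [Fin.snoc_castSucc]

lemma cardB1_pos (M N n : ℕ) (hn : N + 1 ≤ n) :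
    ((pfin (M+1) (N+1) n).filter (fun f => ¬ (f (Fin.last N) : ℕ) = 0)).card
      = P M (N+1) (n-(N+1)) := by
  rw [P_def]
  refine Finset.card_bij'
    (fun f _ => fun k => (⟨min ((f k : ℕ) - 1) M, by omega⟩ : Fin (M+1)))
    (fun g _ => fun k => (g k).succ) ?_ ?_ ?_ ?_
  · intro f hf
    rw [Finset.mem_filter, mem_pfin] at hf
    obtain ⟨⟨hmono, hsum⟩, h0⟩ := hf
    have hpos : ∀ k, 1 ≤ (f k : ℕ) := by
      intro k
      have := hmono k (Fin.last N) (Fin.le_last k)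
      omega
    rw [mem_pfin]
    constructor
    · intro i j hij
      have h1 := hmono i j hij
      have h2 := (f i).isLt
      have h3 := (f j).isLt
      simp only [Fin.val_mk]
      omega
    · have h : ∑ k : Fin (N+1), ((f k : ℕ) - 1 + 1) = n :=
        (Finset.sum_congr rfl fun k _ => by have := hpos k; omega).trans hsum
      rw [Finset.sum_add_distrib] at h
      simp only [Finset.sum_const, Finset.card_univ, Fintype.card_fin,
        smul_eq_mul, mul_one] at h
      have h2 : ∑ k : Fin (N+1), ((f k : ℕ) - 1) = n - (N+1) := by omega
      refine (Finset.sum_congr rfl fun k _ => ?_).trans h2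
      have := (f k).isLt
      simp only [Fin.val_mk]
      omega
  · intro g hg
    rw [mem_pfin] at hg
    obtain ⟨hmono, hsum⟩ := hg
    rw [Finset.mem_filter, mem_pfin]
    refine ⟨⟨?_, ?_⟩, by simp [Fin.val_succ]⟩
    · intro i j hij
      have := hmono i j hij
      simp only [Fin.val_succ]
      omega
    · have h2 : ∑ k : Fin (N+1), ((g k : ℕ) + 1) = n := by
        rw [Finset.sum_add_distrib]
        simp only [Finset.sum_const, Finset.card_univ, Fintype.card_fin,
          smul_eq_mul, mul_one]
        omega
      refine (Finset.sum_congr rfl fun k _ => ?_).trans h2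
      simp [Fin.val_succ]
  · intro f hf
    rw [Finset.mem_filter, mem_pfin] at hf
    obtain ⟨⟨hmono, hsum⟩, h0⟩ := hf
    have hpos : ∀ k, 1 ≤ (f k : ℕ) := by
      intro k
      have := hmono k (Fin.last N) (Fin.le_last k)
      omega
    funext k
    apply Fin.ext
    have h1 := (f k).isLt
    have h2 := hpos k
    simp only [Fin.val_succ, Fin.val_mk]
    omega
  · intro g hg
    funext k
    apply Fin.ext
    have := (g k).isLt
    simp only [Fin.val_succ, Fin.val_mk]
    omega

lemma cardB1_neg (M N n : ℕ) (hn : ¬ N + 1 ≤ n) :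
    ((pfin (M+1) (N+1) n).filter (fun f => ¬ (f (Fin.last N) : ℕ) = 0)).card = 0 := by
  rw [Finset.card_eq_zero, Finset.filter_eq_empty_iff]
  intro f hf
  rw [mem_pfin] at hf
  obtain ⟨hmono, hsum⟩ := hf
  intro h0
  have hpos : ∀ k, 1 ≤ (f k : ℕ) := by
    intro k
    have := hmono k (Fin.last N) (Fin.le_last k)
    omega
  have : ∑ _k : Fin (N+1), 1 ≤ ∑ k, (f k : ℕ) :=
    Finset.sum_le_sum fun k _ => hpos k
  simp only [Finset.sum_const, Finset.card_univ, Fintype.card_fin,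
    smul_eq_mul, mul_one] at this
  omega

/-- split on whether the smallest part is zero -/
lemma R1 (M N n : ℕ) :
    P (M+1) (N+1) n = P (M+1) N n + (if N+1 ≤ n then P M (N+1) (n-(N+1)) else 0) := by
  classical
  have hsplit := Finset.card_filter_add_card_filter_not
    (s := pfin (M+1) (N+1) n) (p := fun f => (f (Fin.last N) : ℕ) = 0)
  rw [P_def, ← hsplit, cardA1]
  by_cases hn : N + 1 ≤ n
  · rw [if_pos hn, cardB1_pos M N n hn]
  · rw [if_neg hn, cardB1_neg M N n hn]

end RP

namespace RP

lemma P_eq_zero {M N n : ℕ} (h : M * N < n) : P M N n = 0 := by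
  rw [P, restrictedPartitions, Finset.card_eq_zero, Finset.filter_eq_empty_iff]
  rintro f - ⟨-, hsum⟩
  have : ∑ i, (f i : ℕ) ≤ ∑ _i : Fin N, M :=
    Finset.sum_le_sum fun i _ => Nat.lt_succ_iff.mp (f i).isLt
  simp only [Finset.sum_const, Finset.card_univ, Fintype.card_fin, smul_eq_mul] at this
  rw [Nat.mul_comm] at h
  omega

lemma P_N_zero (M n : ℕ) : P M 0 n = if n = 0 then 1 else 0 := by
  rw [P, restrictedPartitions]
  rcases eq_or_ne n 0 with rfl | hn
  · rw [if_pos rfl]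
    have : ((Finset.univ : Finset (Fin 0 → Fin (M + 1))).filter
        (fun f => (∀ i j : Fin 0, i ≤ j → (f j : ℕ) ≤ (f i : ℕ)) ∧
          ∑ i, (f i : ℕ) = 0)) = Finset.univ := by
      rw [Finset.filter_eq_self]
      intro f _
      exact ⟨fun i => i.elim0, by simp⟩
    rw [this, Finset.card_univ, Fintype.card_fun]
    simp
  · rw [if_neg hn, Finset.card_eq_zero, Finset.filter_eq_empty_iff]
    rintro f -
    rintro ⟨-, hsum⟩
    simp at hsum
    exact hn hsum.symm

lemma P_M_zero (N n : ℕ) : P 0 N n = if n = 0 then 1 else 0 := by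
  rw [P, restrictedPartitions]
  rcases eq_or_ne n 0 with rfl | hn
  · rw [if_pos rfl]
    have : ((Finset.univ : Finset (Fin N → Fin (0 + 1))).filter
        (fun f => (∀ i j : Fin N, i ≤ j → (f j : ℕ) ≤ (f i : ℕ)) ∧
          ∑ i, (f i : ℕ) = 0)) = Finset.univ := by
      rw [Finset.filter_eq_self]
      intro f _
      refine ⟨fun i j _ => ?_, ?_⟩
      · have h1 : (f i : ℕ) = 0 := Nat.lt_one_iff.mp (f i).isLt
        have h2 : (f j : ℕ) = 0 := Nat.lt_one_iff.mp (f j).isLt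
        omega
      · have : ∀ i, (f i : ℕ) = 0 := fun i => Nat.lt_one_iff.mp (f i).isLt
        simp [this]
    rw [this, Finset.card_univ, Fintype.card_fun]
    simp
  · rw [if_neg hn, Finset.card_eq_zero, Finset.filter_eq_empty_iff]
    rintro f - ⟨-, hsum⟩
    have : ∀ i, (f i : ℕ) = 0 := fun i => Nat.lt_one_iff.mp (f i).isLt
    simp [this] at hsum
    exact hn hsum.symm



section GF
variable {A : Type*} [CommSemiring A]

/-- generating function of partitions in an `M × N` box, evaluated at `z` -/
def V (z : A) (M N : ℕ) : A :=
  ∑ n ∈ Finset.range (M * N + 1), (P M N n : A) * z ^ n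

lemma V_eq (z : A) (M N B : ℕ) (hB : M * N + 1 ≤ B) :
    V z M N = ∑ n ∈ Finset.range B, (P M N n : A) * z ^ n := by
  rw [V]
  refine Finset.sum_subset ?_ ?_
  · intro n hn
    rw [Finset.mem_range] at hn ⊢
    omega
  · intro n hn hn'
    rw [Finset.mem_range] at hn hn'
    rw [P_eq_zero (by omega)]
    simp

lemma V_N_zero (z : A) (M : ℕ) : V z M 0 = 1 := by
  rw [V]
  simp [P_N_zero]

lemma V_M_zero (z : A) (N : ℕ) : V z 0 N = 1 := by
  rw [V]
  simp [P_M_zero]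

lemma shifted_sum (z : A) (g : ℕ → ℕ) (c B : ℕ) (hc : c ≤ B) :
    ∑ n ∈ Finset.range B, ((if c ≤ n then g (n - c) else 0 : ℕ) : A) * z ^ n
      = z ^ c * ∑ m ∈ Finset.range (B - c), (g m : A) * z ^ m := by
  rw [Finset.mul_sum]
  rw [show Finset.range B = Finset.Ico 0 B by rw [Finset.range_eq_Ico]]
  rw [← Finset.sum_Ico_consecutive _ (Nat.zero_le c) hc]
  have h1 : ∑ n ∈ Finset.Ico 0 c, ((if c ≤ n then g (n - c) else 0 : ℕ) : A) * z ^ n = 0 := by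
    refine Finset.sum_eq_zero fun n hn => ?_
    rw [Finset.mem_Ico] at hn
    rw [if_neg (by omega)]
    simp
  rw [h1, zero_add, Finset.sum_Ico_eq_sum_range]
  refine Finset.sum_congr rfl fun m hm => ?_
  rw [if_pos (by omega)]
  have : c + m - c = m := by omega
  rw [this, pow_add]
  ring

lemma GF2 (z : A) (M N : ℕ) :
    V z (M+1) (N+1) = V z M (N+1) + z ^ (M+1) * V z (M+1) N := by
  have hB : (M+1) * (N+1) + 1 - (M+1) = (M+1) * N + 1 := by ring_nf; omega
  rw [V]
  have : ∀ n ∈ Finset.range ((M+1) * (N+1) + 1),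
      (P (M+1) (N+1) n : A) * z ^ n
        = (P M (N+1) n : A) * z ^ n
          + ((if M+1 ≤ n then P (M+1) N (n-(M+1)) else 0 : ℕ) : A) * z ^ n := by
    intro n _
    rw [R2 M N n]
    push_cast
    ring
  rw [Finset.sum_congr rfl this, Finset.sum_add_distrib]
  congr 1
  · rw [V_eq z M (N+1) ((M+1)*(N+1)+1) (by nlinarith)]
  · rw [shifted_sum z (fun m => P (M+1) N m) (M+1) ((M+1)*(N+1)+1) (by nlinarith), hB, ← V]

lemma GF1 (z : A) (M N : ℕ) :
    V z (M+1) (N+1) = V z (M+1) N + z ^ (N+1) * V z M (N+1) := by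
  have hB : (M+1) * (N+1) + 1 - (N+1) = M * (N+1) + 1 := by ring_nf; omega
  rw [V]
  have : ∀ n ∈ Finset.range ((M+1) * (N+1) + 1),
      (P (M+1) (N+1) n : A) * z ^ n
        = (P (M+1) N n : A) * z ^ n
          + ((if N+1 ≤ n then P M (N+1) (n-(N+1)) else 0 : ℕ) : A) * z ^ n := by
    intro n _
    rw [R1 M N n]
    push_cast
    ring
  rw [Finset.sum_congr rfl this, Finset.sum_add_distrib]
  congr 1
  · rw [V_eq z (M+1) N ((M+1)*(N+1)+1) (by nlinarith)]
  · rw [shifted_sum z (fun m => P M (N+1) m) (N+1) ((M+1)*(N+1)+1) (by nlinarith), hB, ← V]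

end GF
end RP

namespace RP

lemma P_one (M n : ℕ) : P M 1 n = if n ≤ M then 1 else 0 := by
  rw [P_def]
  by_cases h : n ≤ M
  · rw [if_pos h, Finset.card_eq_one]
    refine ⟨fun _ => (⟨n, by omega⟩ : Fin (M+1)), ?_⟩
    ext f
    rw [mem_pfin, Finset.mem_singleton]
    constructor
    · rintro ⟨-, hsum⟩
      rw [Fin.sum_univ_one] at hsum
      funext i
      have : i = 0 := Subsingleton.elim i 0
      subst this
      exact Fin.ext hsum
    · rintro rfl
      exact ⟨fun i j _ => le_refl _, by rw [Fin.sum_univ_one]⟩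
  · rw [if_neg h, Finset.card_eq_zero, Finset.eq_empty_iff_forall_notMem]
    intro f hf
    rw [mem_pfin] at hf
    obtain ⟨-, hsum⟩ := hf
    rw [Fin.sum_univ_one] at hsum
    have := (f 0).isLt
    omega

lemma total : ∀ s M N : ℕ, M + N = s →
    V (1 : ℕ) M N = (M + N).choose N := by
  intro s
  induction s using Nat.strong_induction_on with
  | _ s ih =>
    intro M N hs
    match M, N with
    | M, 0 => simp [V_N_zero]
    | 0, N+1 => simp [V_M_zero]
    | M+1, N+1 =>
      rw [GF2, one_pow, one_mul]
      rw [ih (M + (N+1)) (by omega) M (N+1) rfl,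
        ih ((M+1) + N) (by omega) (M+1) N rfl]
      have h1 : M + 1 + (N + 1) = (M + 1 + N) + 1 := by omega
      rw [h1, Nat.choose_succ_succ (M + 1 + N) N]
      have h2 : M + (N + 1) = M + 1 + N := by omega
      rw [h2]
      simp only [Nat.succ_eq_add_one]
      omega

section Cyclo

variable {K : Type*} [Field K] [CharZero K] {p : ℕ} {ζ : K}
  (hp : p.Prime) (hζ : IsPrimitiveRoot ζ p)
include hp hζ

omit hp in
lemma zpow_mod (n : ℕ) : ζ ^ n = ζ ^ (n % p) := by
  conv_lhs => rw [← Nat.div_add_mod n p]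
  rw [pow_add, pow_mul, hζ.pow_eq_one, one_pow, one_mul]

lemma one_sub_pow_ne (k : ℕ) (h1 : 1 ≤ k) (h2 : k ≤ p - 1) : (1 : K) - ζ ^ k ≠ 0 := by
  have := hp.two_le
  intro h
  have h' : ζ ^ k = 1 := by linear_combination -h
  exact hζ.pow_ne_one_of_pos_of_lt (by omega) (by omega) h'

omit hp hζ in
lemma star (M N : ℕ) :
    (1 - ζ ^ (N+1)) * V ζ M (N+1) = (1 - ζ ^ (M+1)) * V ζ (M+1) N := by
  have h1 := GF1 ζ M N
  have h2 := GF2 ζ M N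
  ring_nf
  ring_nf at h1 h2
  linear_combination h1 - h2

lemma Z0 : ∀ N : ℕ, 1 ≤ N → N ≤ p - 1 → V ζ (p - N) N = 0 := by
  have hp2 := hp.two_le
  intro N
  induction N with
  | zero => omega
  | succ N ihN =>
    intro h1 h2
    rcases Nat.eq_zero_or_pos N with rfl | hN
    · -- base : V ζ (p-1) 1 = 0
      have : V ζ (p - 1) 1 = ∑ n ∈ Finset.range p, ζ ^ n := by
        rw [V]
        have hr : (p - 1) * 1 + 1 = p := by omega
        rw [hr]
        refine Finset.sum_congr rfl fun n hn => ?_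
        rw [Finset.mem_range] at hn
        rw [P_one, if_pos (by omega)]
        simp
      rw [this]
      exact hζ.geom_sum_eq_zero (by omega)
    · -- step
      have hst := star (K := K) (ζ := ζ) (p - N - 1) N
      have e1 : p - N - 1 + 1 = p - N := by omega
      rw [e1] at hst
      rw [ihN hN (by omega)] at hst
      rw [mul_zero] at hst
      have hne := one_sub_pow_ne hp hζ (N+1) (by omega) (by omega)
      have e2 : p - (N + 1) = p - N - 1 := by omega
      rw [e2]
      exact (mul_eq_zero.mp hst).resolve_left hne

lemma Zlem : ∀ d K' N : ℕ, K' + N = d → 1 ≤ K' → K' ≤ p - 1 → 1 ≤ N → N ≤ p - 1 →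
    p ≤ K' + N → V ζ K' N = 0 := by
  have hp2 := hp.two_le
  intro d
  induction d using Nat.strong_induction_on with
  | _ d ih =>
    intro K' N hd hK1 hK2 hN1 hN2 hpd
    rcases eq_or_lt_of_le hpd with heq | hlt
    · have : K' = p - N := by omega
      subst this
      exact Z0 hp hζ N hN1 hN2
    · -- K' + N > p
      have hK'2 : 2 ≤ K' := by omega
      have hN2' : 2 ≤ N := by omega
      obtain ⟨K'', rfl⟩ : ∃ K'', K' = K'' + 1 := ⟨K' - 1, by omega⟩
      obtain ⟨N', rfl⟩ : ∃ N', N = N' + 1 := ⟨N - 1, by omega⟩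
      rw [GF2]
      rw [ih (K'' + (N' + 1)) (by omega) K'' (N'+1) rfl (by omega) (by omega)
        (by omega) (by omega) (by omega)]
      rw [ih ((K''+1) + N') (by omega) (K''+1) N' rfl (by omega) (by omega)
        (by omega) (by omega) (by omega)]
      ring

lemma main_ind : ∀ s K' N : ℕ, K' + N = s → N ≤ p - 1 →
    V ζ K' N = if K' % p + N < p then V ζ (K' % p) N else 0 := by
  have hp2 := hp.two_le
  intro s
  induction s using Nat.strong_induction_on with
  | _ s ih =>
    intro K' N hs hN
    rcases Nat.eq_zero_or_pos N with rfl | hN1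
    · rw [if_pos (by have := Nat.mod_lt K' (show 0 < p by omega); omega)]
      rw [V_N_zero, V_N_zero]
    rcases Nat.lt_or_ge K' p with hKp | hKp
    · rw [Nat.mod_eq_of_lt hKp]
      by_cases hc : K' + N < p
      · rw [if_pos hc]
      · rw [if_neg hc]
        exact Zlem hp hζ (K' + N) K' N rfl (by omega) (by omega) (by omega)
          (by omega) (by omega)
    · -- K' ≥ p
      obtain ⟨K'', rfl⟩ : ∃ K'', K' = K'' + 1 := ⟨K' - 1, by omega⟩
      obtain ⟨N', rfl⟩ : ∃ N', N = N' + 1 := ⟨N - 1, by omega⟩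
      rw [GF2]
      set t := (K'' + 1) % p with ht
      have htp : t < p := Nat.mod_lt _ (by omega)
      have hζK : ζ ^ (K'' + 1) = ζ ^ t := zpow_mod hζ _
      have ihA := ih (K'' + (N' + 1)) (by omega) K'' (N'+1) rfl (by omega)
      have ihB := ih ((K''+1) + N') (by omega) (K''+1) N' rfl (by omega)
      have hdm := Nat.div_add_mod (K'' + 1) p
      obtain ⟨q, hq⟩ : ∃ q, (K'' + 1) / p = q := ⟨_, rfl⟩
      rw [hq, ← ht] at hdm
      rcases Nat.eq_zero_or_pos t with ht0 | ht1
      · -- t = 0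
        have hq1 : 1 ≤ q := by
          rcases Nat.eq_zero_or_pos q with rfl | h
          · simp at hdm; omega
          · exact h
        have hmul : p * (q - 1) + p = p * q := by
          obtain ⟨q', rfl⟩ : ∃ q', q = q' + 1 := ⟨q - 1, by omega⟩
          simp [Nat.add_sub_cancel, Nat.mul_succ]
        have hK'' : K'' % p = p - 1 := by
          have e : K'' = (p - 1) + p * (q - 1) := by omega
          rw [e, Nat.add_mul_mod_self_left, Nat.mod_eq_of_lt (by omega)]
        rw [hK''] at ihA
        rw [if_neg (by omega)] at ihA
        rw [← ht, ht0] at ihB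
        rw [if_pos (by omega)] at ihB
        rw [ihA, ihB, hζK, ht0, pow_zero, V_M_zero, if_pos (by omega), V_M_zero]
        ring
      · -- t ≥ 1
        have hK'' : K'' % p = t - 1 := by
          have e : K'' = (t - 1) + p * q := by omega
          rw [e, Nat.add_mul_mod_self_left, Nat.mod_eq_of_lt (by omega)]
        rw [hK''] at ihA
        rw [← ht] at ihB
        have e1 : t - 1 + 1 = t := by omega
        have g := GF2 ζ (t - 1) N'
        rw [e1] at g
        by_cases hc1 : t + (N' + 1) < p
        · rw [if_pos hc1]
          rw [if_pos (by omega)] at ihA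
          rw [if_pos (by omega)] at ihB
          rw [ihA, ihB, hζK]
          exact g.symm
        · rcases eq_or_lt_of_le (Nat.le_of_not_lt hc1) with heq | hlt
          · -- t + N = p
            rw [if_neg hc1]
            rw [if_pos (by omega)] at ihA
            rw [if_pos (by omega)] at ihB
            rw [ihA, ihB, hζK, ← g]
            exact Zlem hp hζ (t + (N'+1)) t (N'+1) rfl (by omega)
              (by omega) (by omega) (by omega) (by omega)
          · rw [if_neg hc1]
            rw [if_neg (by omega)] at ihA
            rw [if_neg (by omega)] at ihB
            rw [ihA, ihB]
            ring

lemma V_Mp (M N : ℕ) (hN1 : 1 ≤ N) (hN : N ≤ p - 1) : V ζ (M * p) N = 1 := by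
  have hp2 := hp.two_le
  have h := main_ind hp hζ (M * p + N) (M * p) N rfl hN
  have hmod : M * p % p = 0 := Nat.mul_mod_left M p
  rw [hmod] at h
  rw [if_pos (by omega)] at h
  rw [h, V_M_zero]

end Cyclo
end RP

namespace RP
section Cyclo2

variable {K : Type*} [Field K] [CharZero K] {p : ℕ} {ζ : K}
  (hp : p.Prime) (hζ : IsPrimitiveRoot ζ p)
include hp hζ

lemma coeffs_eq (b : ℕ → ℤ)
    (hb : ∑ r ∈ Finset.range p, (b r : K) * ζ ^ r = 0) :
    ∀ r < p, b r = b (p - 1) := by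
  have hp2 := hp.two_le
  set c : ℕ → ℤ := fun r => b r - b (p - 1) with hc
  set q : Polynomial ℚ :=
    ∑ r ∈ Finset.range (p - 1), Polynomial.C ((c r : ℚ)) * Polynomial.X ^ r with hqdef
  -- the sum with coefficients c over range p vanishes
  have h1 : ∑ r ∈ Finset.range p, (c r : K) * ζ ^ r = 0 := by
    have hgeo := hζ.geom_sum_eq_zero (by omega)
    have : ∑ r ∈ Finset.range p, (c r : K) * ζ ^ r
        = (∑ r ∈ Finset.range p, (b r : K) * ζ ^ r)
          - (b (p - 1) : K) * ∑ r ∈ Finset.range p, ζ ^ r := by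
      rw [Finset.mul_sum, ← Finset.sum_sub_distrib]
      refine Finset.sum_congr rfl fun r _ => ?_
      simp only [hc]
      push_cast
      ring
    rw [this, hb, hgeo, mul_zero, sub_zero]
  -- hence over range (p-1)
  have h2 : ∑ r ∈ Finset.range (p - 1), (c r : K) * ζ ^ r = 0 := by
    rw [show p = (p - 1) + 1 by omega, Finset.sum_range_succ] at h1
    have hlast : (c ((p : ℕ) - 1) : K) = 0 := by simp [hc]
    rw [hlast, zero_mul, add_zero] at h1
    exact h1
  -- aeval of q at ζ is zero
  have haq : Polynomial.aeval ζ q = 0 := by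
    rw [hqdef, map_sum]
    rw [← h2]
    refine Finset.sum_congr rfl fun r _ => ?_
    rw [map_mul, map_pow, Polynomial.aeval_X, Polynomial.aeval_C]
    congr 1
    rw [show ((c r : ℚ) : ℚ) = ((c r : ℤ) : ℚ) from rfl, map_intCast]
  -- q = 0 by degree considerations
  have hq0 : q = 0 := by
    by_contra hqne
    have hdvd := minpoly.dvd ℚ ζ haq
    have hdeg := Polynomial.degree_le_of_dvd hdvd hqne
    rw [← Polynomial.cyclotomic_eq_minpoly_rat hζ (by omega),
      Polynomial.degree_cyclotomic, Nat.totient_prime hp] at hdeg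
    have hdeg2 : q.degree < ((p - 1 : ℕ) : WithBot ℕ) := by
      rw [hqdef]
      refine lt_of_le_of_lt (Polynomial.degree_sum_le _ _) ?_
      rw [Finset.sup_lt_iff (by exact WithBot.bot_lt_coe _)]
      intro r hr
      rw [Finset.mem_range] at hr
      refine lt_of_le_of_lt (Polynomial.degree_C_mul_X_pow_le r _) ?_
      exact_mod_cast hr
    exact absurd (lt_of_le_of_lt hdeg hdeg2) (lt_irrefl _)
  -- extract coefficients
  intro r hr
  rcases eq_or_lt_of_le (Nat.le_of_lt_succ (by omega : r < (p - 1) + 1)) with heq | hlt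
  · rw [heq]
  · have hcoeff : q.coeff r = (c r : ℚ) := by
      rw [hqdef, Polynomial.finset_sum_coeff]
      rw [Finset.sum_eq_single r]
      · rw [Polynomial.coeff_C_mul, Polynomial.coeff_X_pow, if_pos rfl, mul_one]
      · intro r' _ hne
        rw [Polynomial.coeff_C_mul, Polynomial.coeff_X_pow, if_neg (Ne.symm hne), mul_zero]
      · intro habs
        exact absurd (Finset.mem_range.mpr hlt) habs
    rw [hq0, Polynomial.coeff_zero] at hcoeff
    have : (c r : ℚ) = 0 := hcoeff.symm
    have : c r = 0 := by exact_mod_cast this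
    simp only [hc] at this
    omega

end Cyclo2
end RP

open RP in
/-- For an odd prime p, M ≥ 1, 1 ≤ N ≤ p-1:
∑_{k=0}^{MN} p(Mp, N, kp) = (C(Mp+N, N) − 1)/p + 1. -/
theorem sum_restrictedPartitions_zero_residue (p M N : ℕ)
    (hp : p.Prime) (hodd : Odd p) (hM : 1 ≤ M) (hN1 : 1 ≤ N) (hN : N ≤ p - 1) :
    p * ∑ k ∈ Finset.range (M * N + 1), restrictedPartitions (M * p) N (k * p)
      = ((M * p + N).choose N - 1) + p := by
  classical
  have hp2 := hp.two_le
  haveI : NeZero p := ⟨hp.ne_zero⟩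
  haveI : NeZero (p : ℚ) := ⟨by exact_mod_cast hp.ne_zero⟩
  set K := CyclotomicField p ℚ with hK
  haveI : IsCyclotomicExtension {p} ℚ K := CyclotomicField.isCyclotomicExtension p ℚ
  set ζ : K := IsCyclotomicExtension.zeta p ℚ K with hzeta
  have hζ : IsPrimitiveRoot ζ p := IsCyclotomicExtension.zeta_spec p ℚ K
  set B := (M * p) * N + 1 with hB
  set F : ℕ → ℕ := fun n => P (M * p) N n with hF
  set a : ℕ → ℕ := fun r => ∑ n ∈ (Finset.range B).filter (fun n => n % p = r), F n
    with ha
  have hmaps : ∀ n ∈ Finset.range B, n % p ∈ Finset.range p :=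
    fun n _ => Finset.mem_range.mpr (Nat.mod_lt _ hp.pos)
  -- the key root-of-unity evaluation
  have h1 : V ζ (M * p) N = 1 := V_Mp hp hζ M N hN1 hN
  have h2 : ∑ r ∈ Finset.range p, (a r : K) * ζ ^ r = 1 := by
    have e1 : ∀ r ∈ Finset.range p, (a r : K) * ζ ^ r
        = ∑ n ∈ (Finset.range B).filter (fun n => n % p = r), (F n : K) * ζ ^ n := by
      intro r _
      rw [ha]
      push_cast
      erw [Nat.cast_sum, Finset.sum_mul]
      refine Finset.sum_congr rfl fun n hn => ?_
      rw [Finset.mem_filter] at hn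
      rw [zpow_mod hζ n, hn.2]
    rw [Finset.sum_congr rfl e1,
      Finset.sum_fiberwise_of_maps_to hmaps (fun n => (F n : K) * ζ ^ n)]
    exact h1
  -- apply linear independence
  set b : ℕ → ℤ := fun r => (a r : ℤ) - (if r = 0 then 1 else 0) with hb
  have hbr : ∀ r, b r = (a r : ℤ) - (if r = 0 then 1 else 0) := fun r => rfl
  have hb0 : ∑ r ∈ Finset.range p, (b r : K) * ζ ^ r = 0 := by
    have e2 : ∀ r ∈ Finset.range p, (b r : K) * ζ ^ r
        = (a r : K) * ζ ^ r - (if r = 0 then ζ ^ r else 0) := by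
      intro r _
      rw [hbr r]
      push_cast
      split_ifs <;> ring
    rw [Finset.sum_congr rfl e2, Finset.sum_sub_distrib, h2,
      Finset.sum_ite_eq' (Finset.range p) 0 (fun r => ζ ^ r),
      if_pos (Finset.mem_range.mpr (by omega))]
    simp
  have hall := coeffs_eq hp hζ b hb0
  set c : ℤ := b (p - 1) with hcdef
  have hc1 : (a (p - 1) : ℤ) = c := by
    rw [hcdef, hbr (p - 1), if_neg (by omega)]
    ring
  have ha0 : (a 0 : ℤ) = c + 1 := by
    have h := hall 0 (by omega)
    rw [hbr 0, if_pos rfl] at h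
    omega
  -- total count
  have htot : ∑ r ∈ Finset.range p, a r = (M * p + N).choose N := by
    rw [ha]
    rw [Finset.sum_fiberwise_of_maps_to hmaps F]
    have : V (1 : ℕ) (M * p) N = ∑ n ∈ Finset.range B, F n := by
      rw [V, hB, hF]
      refine Finset.sum_congr rfl fun n _ => by simp
    rw [← this, total (M * p + N) (M * p) N rfl]
  have hTz : ((M * p + N).choose N : ℤ) = p * c + 1 := by
    rw [← htot]
    push_cast
    have e3 : ∀ r ∈ Finset.range p, (a r : ℤ) = c + (if r = 0 then 1 else 0) := by
      intro r hr
      rw [Finset.mem_range] at hr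
      have h := hall r (by omega)
      rw [hbr r] at h
      rcases eq_or_ne r 0 with rfl | hr0
      · rw [if_pos rfl] at h ⊢
        omega
      · rw [if_neg hr0] at h ⊢
        omega
    rw [Finset.sum_congr rfl e3, Finset.sum_add_distrib, Finset.sum_const,
      Finset.card_range, Finset.sum_ite_eq' (Finset.range p) 0 (fun _ => (1:ℤ)),
      if_pos (Finset.mem_range.mpr (by omega))]
    push_cast
    ring
  -- identify a 0 with the sum over multiples of p
  have ha0S : ∑ k ∈ Finset.range (M * N + 1), P (M * p) N (k * p) = a 0 := by
    rw [ha]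
    refine Finset.sum_nbij' (fun k => k * p) (fun n => n / p) ?_ ?_ ?_ ?_ ?_
    · intro k hk
      beta_reduce
      rw [Finset.mem_range] at hk
      rw [Finset.mem_filter, Finset.mem_range]
      refine ⟨?_, Nat.mul_mod_left k p⟩
      have : k * p ≤ (M * N) * p := Nat.mul_le_mul_right p (by omega)
      have e : (M * N) * p = (M * p) * N := by ring
      omega
    · intro n hn
      beta_reduce
      rw [Finset.mem_filter, Finset.mem_range] at hn
      rw [Finset.mem_range]
      obtain ⟨hn1, hn2⟩ := hn
      rw [hB] at hn1
      have hd : p ∣ n := Nat.dvd_of_mod_eq_zero hn2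
      obtain ⟨m, rfl⟩ := hd
      rw [Nat.mul_div_cancel_left m hp.pos]
      by_contra hcon
      have hge : (M * N + 1) * p ≤ m * p := Nat.mul_le_mul_right p (by omega)
      have hlt : m * p < (M * N + 1) * p := by
        calc m * p = p * m := by ring
        _ < M * p * N + 1 := hn1
        _ = (M * N) * p + 1 := by ring
        _ ≤ (M * N + 1) * p := by
            rw [add_mul, one_mul]
            have := hp.pos
            omega
      omega
    · intro k hk
      beta_reduce
      exact Nat.mul_div_cancel k hp.pos
    · intro n hn
      beta_reduce
      rw [Finset.mem_filter] at hn
      exact Nat.div_mul_cancel (Nat.dvd_of_mod_eq_zero hn.2)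
    · intro k hk
      rfl
  rw [ha0S]
  -- finish in ℤ
  have hT1 : 1 ≤ (M * p + N).choose N := Nat.choose_pos (by omega)
  zify [hT1]
  rw [ha0]
  linear_combination -hTz
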